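/- For every p ≥ 2, the assignment ad(Y_0) ↦ −ad(Y_0), ad(X_i) ↦ i·ad(X_i) and ad(Y_i) ↦ −i·ad(Y_i) for 1 ≤ i ≤ p yields a well-defined linear map 𝒟 on the Lie algebra ad(j_{2p}) of inner derivations of j_{2p}, and 𝒟 is an invertible derivation of ad(j_{2p}). -/

import Mathlib

attribute [local instance 100] LieRing.ofAssociativeRing

/-- For `p ≥ 2`, the assignment `ad Y_0 ↦ −ad Y_0`,
`ad X_i ↦ i • ad X_i`, `ad Y_i ↦ −(i • ad Y_i)` (`1 ≤ i ≤ p`) yields a well-defined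
linear map `𝒟` on the Lie algebra `ad(j_{2p})` of inner derivations of the nilpotent
Jordan-type Lie algebra `j_{2p}`, and `𝒟` is an invertible derivation of `ad(j_{2p})`. -/
theorem jordanType_ad_invertible_derivation
    (p : ℕ) (hp : 2 ≤ p)
    (g : Type) [LieRing g] [LieAlgebra ℂ g]
    (b : Module.Basis (Fin (p+1) ⊕ Fin (p+1)) ℂ g)
    (X : Fin (p+1) → g) (Y : Fin (p+1) → g)
    (hX : ∀ i, X i = b (Sum.inl i)) (hY : ∀ i, Y i = b (Sum.inr i))
    -- the nonzero brackets of `j_{2p}`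
    (h1 : ∀ (i : ℕ) (h2i : 2 ≤ i) (hip : i ≤ p),
      ⁅Y 0, X ⟨i, by omega⟩⁆ = X ⟨i - 1, by omega⟩)
    (h2 : ∀ (i : ℕ) (h1i : 1 ≤ i) (hip : i + 1 ≤ p),
      ⁅Y 0, Y ⟨i, by omega⟩⁆ = -(Y ⟨i + 1, by omega⟩))
    (h3 : ∀ (i : ℕ) (h1i : 1 ≤ i) (hip : i + 1 ≤ p),
      ⁅X ⟨i + 1, by omega⟩, Y ⟨i, by omega⟩⁆ = X 0)
    -- all other brackets of basis vectors vanish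
    (h4 : ∀ i j, ⁅X i, X j⁆ = 0)
    (h5 : ⁅Y 0, X 0⁆ = 0)
    (h6 : ⁅Y 0, X 1⁆ = 0)
    (h7 : ⁅Y 0, Y ⟨p, by omega⟩⁆ = 0)
    (h8 : ∀ i j : Fin (p+1), i ≠ 0 → j ≠ 0 → ⁅Y i, Y j⁆ = 0)
    (h9 : ∀ i j : Fin (p+1), j ≠ 0 → i.val ≠ j.val + 1 → ⁅X i, Y j⁆ = 0) :
    ∃ D : (LieAlgebra.ad ℂ g).range →ₗ[ℂ] (LieAlgebra.ad ℂ g).range,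
      (D ⟨LieAlgebra.ad ℂ g (Y 0), Y 0, rfl⟩ = -⟨LieAlgebra.ad ℂ g (Y 0), Y 0, rfl⟩) ∧
      (∀ i : Fin (p+1), i ≠ 0 →
        D ⟨LieAlgebra.ad ℂ g (X i), X i, rfl⟩
            = (i.val : ℂ) • ⟨LieAlgebra.ad ℂ g (X i), X i, rfl⟩ ∧
        D ⟨LieAlgebra.ad ℂ g (Y i), Y i, rfl⟩
            = -((i.val : ℂ) • ⟨LieAlgebra.ad ℂ g (Y i), Y i, rfl⟩)) ∧
      (∀ u v : (LieAlgebra.ad ℂ g).range, D ⁅u, v⁆ = ⁅D u, v⁆ + ⁅u, D v⁆) ∧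
      Function.Bijective D := by
  classical
  haveI : Module.Finite ℂ g := Module.Finite.of_basis b
  -- the eigenvalue function
  set N : Fin (p+1) → ℂ := fun i => if i.val = 0 then 1 else (i.val : ℂ) with hNdef
  have hNne : ∀ i, N i ≠ 0 := by
    intro i
    by_cases h : i.val = 0
    · have hi0 : i = 0 := Fin.ext (by simpa using h)
      simp [hNdef, hi0]
    · simp only [hNdef, h, if_false]
      exact_mod_cast h
  -- the diagonal derivation d on g
  set d : g →ₗ[ℂ] g :=
    b.constr ℂ (Sum.elim (fun i => N i • b (Sum.inl i)) (fun i => -(N i • b (Sum.inr i)))) with hdDef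
  have hd1 : ∀ i, d (b (Sum.inl i)) = N i • b (Sum.inl i) := fun i => b.constr_basis ℂ _ _
  have hd2 : ∀ i, d (b (Sum.inr i)) = -(N i • b (Sum.inr i)) := fun i => b.constr_basis ℂ _ _
  have hdX : ∀ i, d (X i) = N i • X i := by intro i; rw [hX]; exact hd1 i
  have hdY : ∀ i, d (Y i) = -(N i • Y i) := by intro i; rw [hY]; exact hd2 i
  have hvalne : ∀ i : Fin (p+1), i ≠ 0 → i.val ≠ 0 := by
    intro i hi h
    exact hi (Fin.ext (by simpa using h))
  -- N at specific values
  have hN0 : N 0 = 1 := by simp [hNdef]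
  have hNi : ∀ i : Fin (p+1), i.val ≠ 0 → N i = (i.val : ℂ) := by
    intro i h; have hi0 : i ≠ 0 := fun e => h (by simp [e])
    simp [hNdef, hi0]
  -- key bracket computations on basis vectors
  have hXY : ∀ i j : Fin (p+1), d ⁅X i, Y j⁆ = (N i - N j) • ⁅X i, Y j⁆ := by
    intro i j
    by_cases hj : j.val = 0
    · have hj0 : j = 0 := Fin.ext (by simpa using hj)
      subst hj0
      rw [← lie_skew (X i) (Y 0)]
      rcases Nat.lt_or_ge i.val 2 with h2' | h2'
      · have hzero : ⁅Y 0, X i⁆ = 0 := by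
          rcases (by omega : i.val = 0 ∨ i.val = 1) with h | h
          · have : i = 0 := Fin.ext (by simpa using h)
            rw [this]; exact h5
          · have : i = 1 := Fin.ext (by rw [Fin.val_one', Nat.mod_eq_of_lt (by omega)]; omega)
            rw [this]; exact h6
        rw [hzero]; simp
      · have hip : i.val ≤ p := by have := i.isLt; omega
        have hbr := h1 i.val h2' hip
        have e1 : (⟨i.val, by omega⟩ : Fin (p+1)) = i := Fin.ext rfl
        rw [e1] at hbr
        rw [hbr, map_neg, hdX]
        rw [hN0, hNi i (by omega), hNi ⟨i.val - 1, by omega⟩ (by simp; omega)]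
        have hc : ((i.val - 1 : ℕ) : ℂ) = (i.val : ℂ) - 1 := by
          rw [Nat.cast_sub (by omega)]; simp
        rw [show ((⟨i.val - 1, by omega⟩ : Fin (p+1)).val : ℂ) = ((i.val - 1 : ℕ) : ℂ) from rfl, hc]
        module
    · by_cases hij : i.val = j.val + 1
      · have hjp : j.val + 1 ≤ p := by have := i.isLt; omega
        have hb3 := h3 j.val (by omega) hjp
        have e1 : (⟨j.val + 1, by omega⟩ : Fin (p+1)) = i := Fin.ext (by simp; omega)
        have e2 : (⟨j.val, by omega⟩ : Fin (p+1)) = j := Fin.ext rfl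
        rw [e1, e2] at hb3
        rw [hb3, hdX]
        rw [hN0, hNi i (by omega), hNi j hj]
        have : ((i.val : ℂ)) = (j.val : ℂ) + 1 := by exact_mod_cast hij
        rw [this]
        module
      · rw [h9 i j (fun h => hj (by simp [h])) hij]
        simp
  have hY0Y : ∀ j : Fin (p+1), j ≠ 0 → d ⁅Y 0, Y j⁆ = (-(N 0) - N j) • ⁅Y 0, Y j⁆ := by
    intro j hj
    have hjv := hvalne j hj
    by_cases hjp : j.val = p
    · have e1 : (⟨p, by omega⟩ : Fin (p+1)) = j := Fin.ext (by simp; omega)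
      rw [e1] at h7
      rw [h7]; simp
    · have hjp' : j.val + 1 ≤ p := by have := j.isLt; omega
      have hbr := h2 j.val (by omega) hjp'
      have e1 : (⟨j.val, by omega⟩ : Fin (p+1)) = j := Fin.ext rfl
      rw [e1] at hbr
      rw [hbr, map_neg, hdY]
      rw [hN0, hNi j hjv, hNi ⟨j.val + 1, by omega⟩ (by simp)]
      rw [show ((⟨j.val + 1, by omega⟩ : Fin (p+1)).val : ℂ) = ((j.val + 1 : ℕ) : ℂ) from rfl]
      push_cast
      module
  have hYY : ∀ i j : Fin (p+1), d ⁅Y i, Y j⁆ = (-(N i) - N j) • ⁅Y i, Y j⁆ := by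
    intro i j
    by_cases hi : i = 0
    · subst hi
      by_cases hj : j = 0
      · subst hj; simp
      · exact hY0Y j hj
    · by_cases hj : j = 0
      · subst hj
        rw [← lie_skew (Y i) (Y 0), map_neg, hY0Y i hi]
        rw [smul_neg]
        ring_nf
      · rw [h8 i j hi hj]; simp
  -- core: derivation property on pairs of basis vectors
  have hcore : ∀ s t, d ⁅b s, b t⁆ = ⁅d (b s), b t⁆ + ⁅b s, d (b t)⁆ := by
    rintro (i | i) (j | j)
    · rw [← hX i, ← hX j, hdX i, hdX j, smul_lie, lie_smul, h4 i j]; simp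
    · rw [← hX i, ← hY j, hdX, hdY, hXY i j, smul_lie, lie_neg, lie_smul]
      module
    · rw [← hY i, ← hX j, hdY i, hdX j, neg_lie, smul_lie, lie_smul,
        ← lie_skew (Y i) (X j), map_neg, hXY j i]
      module
    · rw [← hY i, ← hY j, hdY, hdY, hYY i j, neg_lie, smul_lie, lie_neg, lie_smul]
      module
  -- derivation property everywhere, by bilinearity
  have h1' : ∀ s (y : g), d ⁅b s, y⁆ = ⁅d (b s), y⁆ + ⁅b s, d y⁆ := by
    intro s
    have hmap : d ∘ₗ (LieAlgebra.ad ℂ g (b s))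
        = (LieAlgebra.ad ℂ g (d (b s))) + (LieAlgebra.ad ℂ g (b s)) ∘ₗ d := by
      apply b.ext
      intro t
      simpa [LieAlgebra.ad_apply] using hcore s t
    intro y
    simpa [LieAlgebra.ad_apply] using LinearMap.congr_fun hmap y
  have key : ∀ x y : g, d ⁅x, y⁆ = ⁅d x, y⁆ + ⁅x, d y⁆ := by
    intro x
    have hmap : d ∘ₗ (LieAlgebra.ad ℂ g x)
        = (LieAlgebra.ad ℂ g (d x)) + (LieAlgebra.ad ℂ g x) ∘ₗ d := by
      apply b.ext
      intro t
      simp only [LinearMap.comp_apply, LinearMap.add_apply, LieAlgebra.ad_apply]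
      rw [← lie_skew x (b t), map_neg, h1' t x, ← lie_skew x (d (b t)), ← lie_skew (d x) (b t)]
      abel
    intro y
    simpa [LieAlgebra.ad_apply] using LinearMap.congr_fun hmap y
  have hD' : ∀ x : g, d ∘ₗ (LieAlgebra.ad ℂ g x) - (LieAlgebra.ad ℂ g x) ∘ₗ d
      = LieAlgebra.ad ℂ g (d x) := by
    intro x
    ext z
    simp only [LinearMap.sub_apply, LinearMap.comp_apply, LieAlgebra.ad_apply]
    rw [key x z]
    abel
  -- right inverse of d
  set e : g →ₗ[ℂ] g :=
    b.constr ℂ (Sum.elim (fun i => (N i)⁻¹ • b (Sum.inl i))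
      (fun i => -((N i)⁻¹ • b (Sum.inr i)))) with heDef
  have hde : ∀ x : g, d (e x) = x := by
    have : d ∘ₗ e = LinearMap.id := by
      apply b.ext
      rintro (i | i) <;>
        simp only [LinearMap.comp_apply, LinearMap.id_apply, heDef, Module.Basis.constr_basis,
          Sum.elim_inl, Sum.elim_inr, map_smul, map_neg, hd1, hd2, smul_neg, neg_neg,
          smul_smul, inv_mul_cancel₀ (hNne i), one_smul]
    intro x
    exact LinearMap.congr_fun this x
  -- the linear map D on the range of ad
  obtain ⟨D, hDval⟩ : ∃ D : (LieAlgebra.ad ℂ g).range →ₗ[ℂ] (LieAlgebra.ad ℂ g).range,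
      ∀ u : (LieAlgebra.ad ℂ g).range,
        (D u : Module.End ℂ g) = d ∘ₗ (u : Module.End ℂ g) - (u : Module.End ℂ g) ∘ₗ d := by
    refine ⟨{ toFun := fun u => ⟨d ∘ₗ u.1 - u.1 ∘ₗ d, ?_⟩
              map_add' := ?_
              map_smul' := ?_ }, fun u => rfl⟩
    · obtain ⟨x, hx⟩ := (LieHom.mem_range (LieAlgebra.ad ℂ g) _).mp u.2
      rw [← hx, hD' x]
      exact (LieHom.mem_range (LieAlgebra.ad ℂ g) _).mpr ⟨d x, rfl⟩
    · intro u v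
      apply Subtype.ext
      show d ∘ₗ (u.1 + v.1) - (u.1 + v.1) ∘ₗ d
          = (d ∘ₗ u.1 - u.1 ∘ₗ d) + (d ∘ₗ v.1 - v.1 ∘ₗ d)
      rw [LinearMap.comp_add, LinearMap.add_comp]
      abel
    · intro c u
      apply Subtype.ext
      show d ∘ₗ (c • u.1) - (c • u.1) ∘ₗ d = c • (d ∘ₗ u.1 - u.1 ∘ₗ d)
      rw [LinearMap.comp_smul, LinearMap.smul_comp, smul_sub]
  have hDad : ∀ x : g, D ⟨LieAlgebra.ad ℂ g x, x, rfl⟩ = ⟨LieAlgebra.ad ℂ g (d x), d x, rfl⟩ := by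
    intro x
    apply Subtype.ext
    rw [hDval]
    exact hD' x
  have hsurj : Function.Surjective D := by
    rintro ⟨A, hA⟩
    obtain ⟨x, hx⟩ := (LieHom.mem_range (LieAlgebra.ad ℂ g) _).mp hA
    refine ⟨⟨LieAlgebra.ad ℂ g (e x), e x, rfl⟩, ?_⟩
    apply Subtype.ext
    rw [hDval]
    show d ∘ₗ (LieAlgebra.ad ℂ g (e x)) - (LieAlgebra.ad ℂ g (e x)) ∘ₗ d = A
    rw [hD', hde, hx]
  refine ⟨D, ?_, ?_, ?_, ?_⟩
  · -- value at ad (Y 0)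
    rw [hDad (Y 0)]
    apply Subtype.ext
    show LieAlgebra.ad ℂ g (d (Y 0)) = -(LieAlgebra.ad ℂ g (Y 0))
    rw [hdY 0, hN0, one_smul, map_neg]
  · intro i hi
    have hvi := hvalne i hi
    constructor
    · rw [hDad (X i)]
      apply Subtype.ext
      show LieAlgebra.ad ℂ g (d (X i)) = (i.val : ℂ) • LieAlgebra.ad ℂ g (X i)
      rw [hdX i, hNi i hvi, map_smul]
    · rw [hDad (Y i)]
      apply Subtype.ext
      show LieAlgebra.ad ℂ g (d (Y i)) = -((i.val : ℂ) • LieAlgebra.ad ℂ g (Y i))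
      rw [hdY i, hNi i hvi, map_neg, map_smul]
  · -- derivation property
    intro u v
    apply Subtype.ext
    rw [hDval]
    show d ∘ₗ ⁅u.1, v.1⁆ - ⁅u.1, v.1⁆ ∘ₗ d
        = ⁅(D u).1, v.1⁆ + ⁅u.1, (D v).1⁆
    rw [hDval u, hDval v]
    simp only [Ring.lie_def, Module.End.mul_eq_comp, LinearMap.comp_sub, LinearMap.sub_comp,
      LinearMap.comp_assoc]
    abel
  · haveI : FiniteDimensional ℂ (LieAlgebra.ad ℂ g).range := inferInstance
    exact ⟨LinearMap.injective_iff_surjective.mpr hsurj, hsurj⟩
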